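/- arXiv:2204.14165 — 3 statements merged into one kernel-verified Lean document; each statement's English description precedes it below -/
import Mathlib

section
/- Fix a > 0 and x₂ > 0. For every x₁ > 0, the function t ↦ V_a(t, x₂) has derivative −Φ(a/2 − (1/a)·log(x₁/x₂)) / x₁² at t = x₁. -/
open Real MeasureTheory Filter Topology

/-- The standard normal density φ(t) = (2π)^{-1/2} e^{-t²/2}. -/
noncomputable def stdNormalPDF (t : ℝ) : ℝ :=
  (Real.sqrt (2 * Real.pi))⁻¹ * Real.exp (-t ^ 2 / 2)

/-- The standard normal cumulative distribution function Φ. -/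
noncomputable def stdNormalCDF (t : ℝ) : ℝ :=
  ∫ u in Set.Iic t, stdNormalPDF u

/-- The bivariate Brown–Resnick exponent measure V_a(x₁, x₂). -/
noncomputable def brV (a x₁ x₂ : ℝ) : ℝ :=
  (1 / x₁) * stdNormalCDF (a / 2 - (1 / a) * Real.log (x₁ / x₂)) +
    (1 / x₂) * stdNormalCDF (a / 2 - (1 / a) * Real.log (x₂ / x₁))

lemma pdf_integrable : Integrable stdNormalPDF := by
  have : Integrable fun x : ℝ => Real.exp (-(1/2) * x ^ 2) := integrable_exp_neg_mul_sq (by norm_num)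
  have h := this.const_mul (Real.sqrt (2 * Real.pi))⁻¹
  refine h.congr (Filter.Eventually.of_forall fun x => ?_)
  unfold stdNormalPDF
  ring_nf

lemma pdf_continuous : Continuous stdNormalPDF := by
  unfold stdNormalPDF
  continuity

lemma cdf_hasDerivAt (x : ℝ) : HasDerivAt stdNormalCDF (stdNormalPDF x) x := by
  have heq : ∀ t, stdNormalCDF t = stdNormalCDF 0 + ∫ u in (0:ℝ)..t, stdNormalPDF u := by
    intro t
    have := intervalIntegral.integral_Iic_sub_Iic (f := stdNormalPDF) (μ := volume)
      (a := (0:ℝ)) (b := t) pdf_integrable.integrableOn pdf_integrable.integrableOn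
    unfold stdNormalCDF
    linarith [this]
  have h : HasDerivAt (fun t => stdNormalCDF 0 + ∫ u in (0:ℝ)..t, stdNormalPDF u) (stdNormalPDF x) x := by
    refine HasDerivAt.const_add _ ?_
    exact intervalIntegral.integral_hasDerivAt_right (pdf_integrable.intervalIntegrable)
      (pdf_integrable.1.stronglyMeasurableAtFilter)  (pdf_continuous.continuousAt)
  exact h.congr_of_eventuallyEq (Filter.Eventually.of_forall fun t => (heq t))

theorem stmt1 (a x₂ : ℝ) (ha : 0 < a) (hx₂ : 0 < x₂) :
    ∀ x₁ : ℝ, 0 < x₁ →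
      HasDerivAt (fun t => brV a t x₂)
        (-(stdNormalCDF (a / 2 - (1 / a) * Real.log (x₁ / x₂)) / x₁ ^ 2)) x₁ := by
  intro x₁ hx₁
  have ha' : a ≠ 0 := ha.ne'
  have hx₁' : x₁ ≠ 0 := hx₁.ne'
  have hx₂' : x₂ ≠ 0 := hx₂.ne'
  set G := a / 2 - (1 / a) * Real.log (x₁ / x₂) with hG
  set H := a / 2 - (1 / a) * Real.log (x₂ / x₁) with hH
  -- derivative of g : t ↦ a/2 - (1/a) log (t/x₂)
  have hlog1 : HasDerivAt (fun t : ℝ => Real.log (t / x₂)) (1 / x₁) x₁ := by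
    have h1 : HasDerivAt (fun t : ℝ => t / x₂) (1 / x₂) x₁ := by
      simpa using (hasDerivAt_id x₁).div_const x₂
    have := h1.log (by positivity)
    convert this using 1
    field_simp
  have hg : HasDerivAt (fun t : ℝ => a / 2 - (1 / a) * Real.log (t / x₂))
      (-(1 / (a * x₁))) x₁ := by
    have := ((hlog1.const_mul (1 / a)).const_sub (a / 2))
    exact this.congr_deriv (by ring)
  have hlog2 : HasDerivAt (fun t : ℝ => Real.log (x₂ / t)) (-(1 / x₁)) x₁ := by
    have h1 : HasDerivAt (fun t : ℝ => x₂ / t) (-(x₂ / x₁ ^ 2)) x₁ := by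
      have := (hasDerivAt_inv hx₁').const_mul x₂
      simpa [div_eq_mul_inv, mul_comm] using this.congr_deriv (by ring)
    have := h1.log (by positivity)
    convert this using 1
    field_simp
  have hh : HasDerivAt (fun t : ℝ => a / 2 - (1 / a) * Real.log (x₂ / t))
      (1 / (a * x₁)) x₁ := by
    have := ((hlog2.const_mul (1 / a)).const_sub (a / 2))
    exact this.congr_deriv (by ring)
  -- compose with CDF
  have hc1 : HasDerivAt (fun t : ℝ => stdNormalCDF (a / 2 - (1 / a) * Real.log (t / x₂)))
      (stdNormalPDF G * (-(1 / (a * x₁)))) x₁ := by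
    have h0 := cdf_hasDerivAt G
    rw [hG] at h0
    exact h0.comp x₁ hg
  have hc2 : HasDerivAt (fun t : ℝ => stdNormalCDF (a / 2 - (1 / a) * Real.log (x₂ / t)))
      (stdNormalPDF H * (1 / (a * x₁))) x₁ := by
    have h0 := cdf_hasDerivAt H
    rw [hH] at h0
    exact h0.comp x₁ hh
  have hinv : HasDerivAt (fun t : ℝ => 1 / t) (-(x₁ ^ 2)⁻¹) x₁ := by
    simpa [one_div] using hasDerivAt_inv hx₁'
  have hmain : HasDerivAt (fun t => brV a t x₂)
      (-(x₁ ^ 2)⁻¹ * stdNormalCDF G + (1 / x₁) * (stdNormalPDF G * (-(1 / (a * x₁)))) +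
        (1 / x₂) * (stdNormalPDF H * (1 / (a * x₁)))) x₁ := by
    unfold brV
    exact (hinv.mul hc1).add (hc2.const_mul (1 / x₂))
  -- key identity: x₂ * pdf G = x₁ * pdf H
  have hkey : x₂ * stdNormalPDF G = x₁ * stdNormalPDF H := by
    unfold stdNormalPDF
    have hL : Real.log (x₂ / x₁) = - Real.log (x₁ / x₂) := by
      rw [← Real.log_inv]; congr 1; field_simp
    have hexp : Real.exp (-G ^ 2 / 2) = Real.exp (-H ^ 2 / 2) * (x₁ / x₂) := by
      rw [← Real.exp_log (show (0:ℝ) < x₁ / x₂ by positivity), ← Real.exp_add]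
      congr 1
      rw [hG, hH, hL, Real.log_div hx₁' hx₂']
      field_simp
      ring
    rw [hexp]
    field_simp
  convert hmain using 1
  have h2 : stdNormalPDF H = x₂ * stdNormalPDF G / x₁ := by
    field_simp
    linarith [hkey]
  rw [h2]
  field_simp
  ring
end

section
/- Let μ be the unit Fréchet probability measure on ℝ (the Borel probability measure with μ((−∞, x]) = exp(−1/x) for x > 0 and 0 otherwise), and let m ≥ 1 be an integer. Then the pushforward of the m-fold product measure μ^{⊗m} on ℝ^m under the map y ↦ (max_{1 ≤ i ≤ m} y_i)/m equals μ; i.e., the unit Fréchet distribution is max-stable. -/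
open MeasureTheory

theorem stmt17 (μ : Measure ℝ) [IsProbabilityMeasure μ]
    (hcdf : ∀ x : ℝ, 0 < x → μ (Set.Iic x) = ENNReal.ofReal (Real.exp (-1 / x)))
    (hzero : ∀ x : ℝ, x ≤ 0 → μ (Set.Iic x) = 0)
    (m : ℕ) (hm : 1 ≤ m) :
    Measure.map (fun y : Fin m → ℝ => (⨆ i, y i) / (m : ℝ))
      (Measure.pi fun _ : Fin m => μ) = μ := by
  have hmpos : (0 : ℝ) < m := by exact_mod_cast hm
  haveI : Nonempty (Fin m) := ⟨⟨0, hm⟩⟩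
  have hmeas : Measurable (fun y : Fin m → ℝ => (⨆ i, y i) / (m : ℝ)) := by
    exact (Measurable.iSup (fun i => measurable_pi_apply i)).div_const _
  haveI : IsProbabilityMeasure
      (Measure.map (fun y : Fin m → ℝ => (⨆ i, y i) / (m : ℝ))
        (Measure.pi fun _ : Fin m => μ)) :=
    Measure.isProbabilityMeasure_map hmeas.aemeasurable
  refine Measure.ext_of_Iic _ _ (fun x => ?_)
  rw [Measure.map_apply hmeas measurableSet_Iic]
  have hpre : (fun y : Fin m → ℝ => (⨆ i, y i) / (m : ℝ)) ⁻¹' Set.Iic x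
      = Set.pi Set.univ (fun _ : Fin m => Set.Iic (m * x)) := by
    ext y
    simp only [Set.mem_preimage, Set.mem_Iic, Set.mem_pi, Set.mem_univ, true_implies]
    rw [div_le_iff₀ hmpos]
    have hbdd : BddAbove (Set.range y) := (Set.finite_range y).bddAbove
    rw [ciSup_le_iff hbdd]
    constructor
    · intro h i; linarith [h i]
    · intro h i; linarith [h i]
  rw [hpre, Measure.pi_pi]
  rcases le_or_gt x 0 with hx | hx
  · rw [hzero x hx]
    have h0 : μ (Set.Iic ((m : ℝ) * x)) = 0 :=
      hzero _ (mul_nonpos_of_nonneg_of_nonpos hmpos.le hx)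
    simp [h0, Finset.prod_const, zero_pow (Nat.one_le_iff_ne_zero.mp hm)]
  · rw [hcdf x hx, hcdf _ (by positivity)]
    rw [Finset.prod_const, ← ENNReal.ofReal_pow (Real.exp_nonneg _), ← Real.exp_nat_mul]
    congr 2
    field_simp
    simp
end

section
/- Let p ≤ q be positive integers, let c be a symmetric positive definite real q×q matrix, let M be a real q×p matrix, and let W be a symmetric positive semidefinite real q×q matrix such that MᵀWM is invertible. Then Mᵀc^{−1}M is invertible and the matrix (MᵀWM)^{−1} Mᵀ W c W M (MᵀWM)^{−1} − (Mᵀ c^{−1} M)^{−1} is positive semidefinite. In particular, taking M to be the stacked sensitivity matrix i(θ₀), c the variability matrix c(θ₀), and W the block-diagonal weight W = diag{(c^{−1})_{k,k}}, the asymptotic covariance h^{−1} g h^{−ᵀ} of the proposed block-diagonal GMM estimator dominates, in the Loewner order, the covariance (iᵀ c^{−1} i)^{−1} of the optimally weighted GMM estimator (Hansen's optimal weighting). -/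
open Matrix

theorem stmt19 (p q : ℕ) (hp : 0 < p) (hpq : p ≤ q)
    (c : Matrix (Fin q) (Fin q) ℝ) (hc : c.PosDef)
    (M : Matrix (Fin q) (Fin p) ℝ)
    (W : Matrix (Fin q) (Fin q) ℝ) (hW : W.PosSemidef)
    (hinv : IsUnit (Mᵀ * W * M)) :
    IsUnit (Mᵀ * c⁻¹ * M) ∧
      ((Mᵀ * W * M)⁻¹ * (Mᵀ * W * c * W * M) * (Mᵀ * W * M)⁻¹ -
        (Mᵀ * c⁻¹ * M)⁻¹).PosSemidef := by
  classical
  have hMT : Mᴴ = Mᵀ := by ext i j; simp [conjTranspose_apply]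
  have hWs : Wᵀ = W := by
    conv_rhs => rw [← hW.isHermitian.eq]
    ext i j; simp [conjTranspose_apply]
  have hcs : cᵀ = c := by
    conv_rhs => rw [← hc.isHermitian.eq]
    ext i j; simp [conjTranspose_apply]
  have hdetA : IsUnit (Mᵀ * W * M).det := (Matrix.isUnit_iff_isUnit_det _).mp hinv
  have hAl : (Mᵀ * W * M)⁻¹ * (Mᵀ * W * M) = 1 := Matrix.nonsing_inv_mul _ hdetA
  have hAr : (Mᵀ * W * M) * (Mᵀ * W * M)⁻¹ = 1 := Matrix.mul_nonsing_inv _ hdetA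
  -- M is injective as a linear map
  have hMinj : ∀ x : Fin p → ℝ, M *ᵥ x = 0 → x = 0 := by
    intro x hx
    have h0 : (Mᵀ * W * M) *ᵥ x = 0 := by
      rw [← Matrix.mulVec_mulVec, ← Matrix.mulVec_mulVec, hx]
      simp
    calc x = ((Mᵀ * W * M)⁻¹ * (Mᵀ * W * M)) *ᵥ x := by rw [hAl]; simp
    _ = (Mᵀ * W * M)⁻¹ *ᵥ ((Mᵀ * W * M) *ᵥ x) := by rw [Matrix.mulVec_mulVec]
    _ = 0 := by rw [h0]; simp
  have hcinv : (c⁻¹).PosDef := hc.inv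
  have hB : (Mᵀ * c⁻¹ * M).PosDef := by
    rw [← hMT]
    refine PosDef.of_dotProduct_mulVec_pos ?_ ?_
    · exact isHermitian_conjTranspose_mul_mul M hcinv.isHermitian
    · intro x hx
      have hMx : M *ᵥ x ≠ 0 := fun h => hx (hMinj x h)
      simpa only [star_mulVec, dotProduct_mulVec, vecMul_vecMul] using hcinv.dotProduct_mulVec_pos hMx
  have hBu : IsUnit (Mᵀ * c⁻¹ * M) := hB.isUnit
  refine ⟨hBu, ?_⟩
  have hdetB : IsUnit (Mᵀ * c⁻¹ * M).det := (Matrix.isUnit_iff_isUnit_det _).mp hBu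
  have hBl : (Mᵀ * c⁻¹ * M)⁻¹ * (Mᵀ * c⁻¹ * M) = 1 := Matrix.nonsing_inv_mul _ hdetB
  have hBr : (Mᵀ * c⁻¹ * M) * (Mᵀ * c⁻¹ * M)⁻¹ = 1 := Matrix.mul_nonsing_inv _ hdetB
  have hdetc : IsUnit c.det := (Matrix.isUnit_iff_isUnit_det _).mp hc.isUnit
  have hcl : c⁻¹ * c = 1 := Matrix.nonsing_inv_mul _ hdetc
  have hcr : c * c⁻¹ = 1 := Matrix.mul_nonsing_inv _ hdetc
  set A := Mᵀ * W * M with hA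
  set B := Mᵀ * c⁻¹ * M with hBdef
  set E := A⁻¹ * (Mᵀ * W) - B⁻¹ * (Mᵀ * c⁻¹) with hE
  have hcis : (c⁻¹)ᵀ = c⁻¹ := by rw [Matrix.transpose_nonsing_inv, hcs]
  have hAs : Aᵀ = A := by rw [hA, Matrix.transpose_mul, Matrix.transpose_mul, hWs, Matrix.transpose_transpose, Matrix.mul_assoc]
  have hBs : Bᵀ = B := by rw [hBdef, Matrix.transpose_mul, Matrix.transpose_mul, hcis, Matrix.transpose_transpose, Matrix.mul_assoc]
  have hEH : Eᴴ = W * M * A⁻¹ - c⁻¹ * M * B⁻¹ := by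
    rw [hE]
    have : (A⁻¹ * (Mᵀ * W) - B⁻¹ * (Mᵀ * c⁻¹))ᴴ = (A⁻¹ * (Mᵀ * W) - B⁻¹ * (Mᵀ * c⁻¹))ᵀ := by
      ext i j; simp [conjTranspose_apply]
    rw [this, Matrix.transpose_sub, Matrix.transpose_mul, Matrix.transpose_mul,
      Matrix.transpose_mul, Matrix.transpose_mul, Matrix.transpose_transpose,
      hWs, hcis, Matrix.transpose_nonsing_inv, Matrix.transpose_nonsing_inv, hAs, hBs]
  have key : A⁻¹ * (Mᵀ * W * c * W * M) * A⁻¹ - B⁻¹ = E * c * Eᴴ := by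
    rw [hEH, hE]
    simp only [Matrix.sub_mul, Matrix.mul_sub]
    have t1 : A⁻¹ * (Mᵀ * W) * c * (W * M * A⁻¹) = A⁻¹ * (Mᵀ * W * c * W * M) * A⁻¹ := by
      simp [Matrix.mul_assoc]
    have t2 : A⁻¹ * (Mᵀ * W) * c * (c⁻¹ * M * B⁻¹) = B⁻¹ := by
      calc A⁻¹ * (Mᵀ * W) * c * (c⁻¹ * M * B⁻¹)
          = A⁻¹ * (Mᵀ * W * (c * c⁻¹) * M * B⁻¹) := by simp [Matrix.mul_assoc]
        _ = B⁻¹ := by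
            rw [hcr, Matrix.mul_one, ← hA, ← Matrix.mul_assoc, hAl, Matrix.one_mul]
    have t3 : B⁻¹ * (Mᵀ * c⁻¹) * c * (W * M * A⁻¹) = B⁻¹ := by
      calc B⁻¹ * (Mᵀ * c⁻¹) * c * (W * M * A⁻¹)
          = B⁻¹ * (Mᵀ * (c⁻¹ * c) * W * M * A⁻¹) := by simp [Matrix.mul_assoc]
        _ = B⁻¹ := by
            rw [hcl, Matrix.mul_one]
            rw [show Mᵀ * W * M * A⁻¹ = A * A⁻¹ from by rw [← hA], hAr, Matrix.mul_one]
    have t4 : B⁻¹ * (Mᵀ * c⁻¹) * c * (c⁻¹ * M * B⁻¹) = B⁻¹ := by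
      calc B⁻¹ * (Mᵀ * c⁻¹) * c * (c⁻¹ * M * B⁻¹)
          = B⁻¹ * (Mᵀ * c⁻¹ * (c * c⁻¹) * M * B⁻¹) := by simp [Matrix.mul_assoc]
        _ = B⁻¹ := by
            rw [hcr, Matrix.mul_one]
            rw [show Mᵀ * c⁻¹ * M * B⁻¹ = B * B⁻¹ from by rw [← hBdef], hBr, Matrix.mul_one]
    rw [t1, t2, t3, t4]
    abel
  rw [key]
  exact hc.posSemidef.mul_mul_conjTranspose_same E
end
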